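/- Suppose f ∈ W(ℝ^d) is locally Riemann integrable. Then lim_{a→0} sup_{y∈ℝ^d} |∑_{n∈ℤ^d} a^d f(y + na) − ∫_{ℝ^d} f(x) dx| = 0; i.e., the Riemann sums of f on the lattice aℤ^d + y converge to ∫ f uniformly in the offset y as a → 0. -/

import Mathlib

open MeasureTheory ENNReal

noncomputable section

/-- Coercion of a lattice point `k ∈ ℤ^d` to `ℝ^d`. -/
def zVec {d : ℕ} (k : Fin d → ℤ) : Fin d → ℝ := fun i => (k i : ℝ)

/-- The unit cube `Q = [0,1)^d` translated by `k ∈ ℤ^d`. -/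
def block (d : ℕ) (k : Fin d → ℤ) : Set (Fin d → ℝ) :=
  {x | ∀ i, (k i : ℝ) ≤ x i ∧ x i < (k i : ℝ) + 1}

/-- `‖f · T_k χ_Q‖_p`, the local `L^p` norm of `f` on the cube `k + Q`. -/
def blockNorm (d : ℕ) (p : ℝ≥0∞) (f : (Fin d → ℝ) → ℂ) (k : Fin d → ℤ) : ℝ≥0∞ :=
  eLpNorm ((block d k).indicator f) p volume

/-- The Wiener space norm `‖f‖_{W(ℝ^d)} = ∑_{k∈ℤ^d} ‖f·T_k χ_Q‖_∞`. -/
def wienerNorm (d : ℕ) (f : (Fin d → ℝ) → ℂ) : ℝ≥0∞ :=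
  ∑' k : Fin d → ℤ, blockNorm d ∞ f k

/-- The Wiener amalgam norm `‖f‖_{W(L^p,ℓ^q)} = (∑_{k∈ℤ^d} ‖f·T_k χ_Q‖_p^q)^{1/q}`,
with the supremum in place of the sum when `q = ∞`. -/
def amalgamNorm (d : ℕ) (p q : ℝ≥0∞) (f : (Fin d → ℝ) → ℂ) : ℝ≥0∞ :=
  if q = ∞ then ⨆ k : Fin d → ℤ, blockNorm d p f k
  else (∑' k : Fin d → ℤ, blockNorm d p f k ^ q.toReal) ^ (1 / q.toReal)

namespace Stmt10

variable {d : ℕ}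

/-- half-open cube of side `a` at corner `y + a•n`. -/
def cube (y : Fin d → ℝ) (a : ℝ) (n : Fin d → ℤ) : Set (Fin d → ℝ) :=
  Set.univ.pi fun i => Set.Ico (y i + a * n i) (y i + a * n i + a)

lemma mem_cube {y : Fin d → ℝ} {a : ℝ} {n : Fin d → ℤ} {x : Fin d → ℝ} :
    x ∈ cube y a n ↔ ∀ i, y i + a * n i ≤ x i ∧ x i < y i + a * n i + a := by
  simp [cube, Set.mem_pi]

lemma measurableSet_cube (y : Fin d → ℝ) (a : ℝ) (n : Fin d → ℤ) :
    MeasurableSet (cube y a n) :=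
  MeasurableSet.univ_pi fun _ => measurableSet_Ico

lemma volume_cube (y : Fin d → ℝ) {a : ℝ} (ha : 0 < a) (n : Fin d → ℤ) :
    volume (cube y a n) = ENNReal.ofReal (a ^ d) := by
  rw [cube, volume_pi_pi]
  simp only [Real.volume_Ico, add_sub_cancel_left]
  rw [Finset.prod_const, ← ENNReal.ofReal_pow ha.le, Finset.card_univ, Fintype.card_fin]

lemma mem_cube_iff_floor {y : Fin d → ℝ} {a : ℝ} (ha : 0 < a) {n : Fin d → ℤ}
    {x : Fin d → ℝ} : x ∈ cube y a n ↔ ∀ i, ⌊(x i - y i) / a⌋ = n i := by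
  rw [mem_cube]
  refine forall_congr' fun i => ?_
  rw [Int.floor_eq_iff]
  constructor
  · rintro ⟨h1, h2⟩
    constructor
    · rw [le_div_iff₀ ha]; linarith
    · rw [div_lt_iff₀ ha]; push_cast; linarith
  · rintro ⟨h1, h2⟩
    rw [le_div_iff₀ ha] at h1
    rw [div_lt_iff₀ ha] at h2
    push_cast at h2
    constructor <;> linarith

lemma iUnion_cube (y : Fin d → ℝ) {a : ℝ} (ha : 0 < a) :
    (⋃ n : Fin d → ℤ, cube y a n) = Set.univ := by
  ext x
  simp only [Set.mem_iUnion, Set.mem_univ, iff_true]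
  exact ⟨fun i => ⌊(x i - y i) / a⌋, (mem_cube_iff_floor ha).2 fun i => rfl⟩

lemma pairwise_disjoint_cube (y : Fin d → ℝ) {a : ℝ} (ha : 0 < a) :
    Pairwise (Function.onFun Disjoint fun n : Fin d → ℤ => cube y a n) := by
  intro n m hnm
  refine Set.disjoint_left.2 fun x hxn hxm => hnm ?_
  funext i
  rw [mem_cube_iff_floor ha] at hxn hxm
  rw [← hxn i, ← hxm i]

lemma lintegral_eq_tsum_cube (y : Fin d → ℝ) {a : ℝ} (ha : 0 < a)
    (g : (Fin d → ℝ) → ℝ≥0∞) :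
    ∫⁻ x, g x = ∑' n : Fin d → ℤ, ∫⁻ x in cube y a n, g x := by
  rw [← setLIntegral_univ, ← iUnion_cube y ha,
    lintegral_iUnion (fun n => measurableSet_cube y a n) (pairwise_disjoint_cube y ha)]

lemma block_eq_cube (k : Fin d → ℤ) : block d k = cube 0 1 k := by
  ext x
  simp [block, mem_cube]

end Stmt10

namespace Stmt10

/-- oscillation of `f` over the open ball of radius `a` -/
def osc (f : (Fin d → ℝ) → ℂ) (a : ℝ) (x : Fin d → ℝ) : ℝ≥0∞ :=
  ⨆ z ∈ Metric.ball x a, ⨆ w ∈ Metric.ball x a, (‖f z - f w‖₊ : ℝ≥0∞)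

lemma le_osc {f : (Fin d → ℝ) → ℂ} {a : ℝ} {x z w : Fin d → ℝ}
    (hz : z ∈ Metric.ball x a) (hw : w ∈ Metric.ball x a) :
    (‖f z - f w‖₊ : ℝ≥0∞) ≤ osc f a x :=
  le_iSup₂_of_le z hz (le_iSup₂_of_le w hw le_rfl)

lemma osc_lsc (f : (Fin d → ℝ) → ℂ) (a : ℝ) : LowerSemicontinuous (osc f a) := by
  intro x c hc
  rw [osc, gt_iff_lt, lt_iSup_iff] at hc
  obtain ⟨z, hc⟩ := hc
  rw [lt_iSup_iff] at hc
  obtain ⟨hz, hc⟩ := hc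
  rw [lt_iSup_iff] at hc
  obtain ⟨w, hc⟩ := hc
  rw [lt_iSup_iff] at hc
  obtain ⟨hw, hc⟩ := hc
  have hopen : IsOpen (Metric.ball z a ∩ Metric.ball w a) :=
    (Metric.isOpen_ball).inter Metric.isOpen_ball
  have hx : x ∈ Metric.ball z a ∩ Metric.ball w a :=
    ⟨Metric.mem_ball.2 (by rw [dist_comm]; exact hz), Metric.mem_ball.2 (by rw [dist_comm]; exact hw)⟩
  filter_upwards [hopen.mem_nhds hx] with x' hx'
  exact lt_of_lt_of_le hc (le_osc (Metric.mem_ball.2 (by rw [dist_comm]; exact hx'.1))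
    (Metric.mem_ball.2 (by rw [dist_comm]; exact hx'.2)))

lemma osc_measurable (f : (Fin d → ℝ) → ℂ) (a : ℝ) : Measurable (osc f a) :=
  (osc_lsc f a).measurable

/-- local sup of `‖f‖` over the ball of radius 1 -/
def locSup (f : (Fin d → ℝ) → ℂ) (x : Fin d → ℝ) : ℝ≥0∞ :=
  ⨆ z ∈ Metric.ball x 1, (‖f z‖₊ : ℝ≥0∞)

lemma locSup_lsc (f : (Fin d → ℝ) → ℂ) : LowerSemicontinuous (locSup f) := by
  intro x c hc
  rw [locSup, gt_iff_lt, lt_iSup_iff] at hc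
  obtain ⟨z, hc⟩ := hc
  rw [lt_iSup_iff] at hc
  obtain ⟨hz, hc⟩ := hc
  filter_upwards [Metric.isOpen_ball.mem_nhds (Metric.mem_ball.2 (by rw [dist_comm]; exact hz) :
    x ∈ Metric.ball z 1)] with x' hx'
  exact lt_of_lt_of_le hc (le_iSup₂_of_le z (Metric.mem_ball.2 (by rw [dist_comm]; exact hx')) le_rfl)

lemma locSup_measurable (f : (Fin d → ℝ) → ℂ) : Measurable (locSup f) :=
  (locSup_lsc f).measurable

lemma osc_le_locSup {f : (Fin d → ℝ) → ℂ} {a : ℝ} (ha : a ≤ 1) (x : Fin d → ℝ) :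
    osc f a x ≤ 2 * locSup f x := by
  refine iSup₂_le fun z hz => iSup₂_le fun w hw => ?_
  have hz' : z ∈ Metric.ball x 1 := Metric.ball_subset_ball ha hz
  have hw' : w ∈ Metric.ball x 1 := Metric.ball_subset_ball ha hw
  calc (‖f z - f w‖₊ : ℝ≥0∞) ≤ (‖f z‖₊ : ℝ≥0∞) + (‖f w‖₊ : ℝ≥0∞) := by
        exact_mod_cast ENNReal.coe_le_coe.2 (nnnorm_sub_le _ _)
    _ ≤ locSup f x + locSup f x :=
        add_le_add (le_iSup₂_of_le z hz' le_rfl) (le_iSup₂_of_le w hw' le_rfl)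
    _ = 2 * locSup f x := (two_mul _).symm

end Stmt10

namespace Stmt10

variable {f : (Fin d → ℝ) → ℂ}

lemma volume_block (k : Fin d → ℤ) : volume (block d k) = 1 := by
  rw [block_eq_cube, volume_cube 0 one_pos, one_pow, ENNReal.ofReal_one]

lemma measurableSet_block (k : Fin d → ℤ) : MeasurableSet (block d k) := by
  rw [block_eq_cube]; exact measurableSet_cube _ _ _

lemma setLIntegral_block_le (k : Fin d → ℤ) :
    ∫⁻ x in block d k, (‖f x‖₊ : ℝ≥0∞) ≤ ⨆ x ∈ block d k, (‖f x‖₊ : ℝ≥0∞) := by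
  calc ∫⁻ x in block d k, (‖f x‖₊ : ℝ≥0∞)
      ≤ ∫⁻ _ in block d k, ⨆ x ∈ block d k, (‖f x‖₊ : ℝ≥0∞) :=
        setLIntegral_mono' (measurableSet_block k) fun x hx => le_iSup₂_of_le x hx le_rfl
    _ = (⨆ x ∈ block d k, (‖f x‖₊ : ℝ≥0∞)) * volume (block d k) := setLIntegral_const _ _
    _ = _ := by rw [volume_block, mul_one]

lemma lintegral_enorm_le :
    ∫⁻ x, (‖f x‖₊ : ℝ≥0∞) ≤ ∑' k : Fin d → ℤ, ⨆ x ∈ block d k, (‖f x‖₊ : ℝ≥0∞) := by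
  rw [lintegral_eq_tsum_cube 0 one_pos]
  refine ENNReal.tsum_le_tsum fun k => ?_
  rw [← block_eq_cube]
  exact setLIntegral_block_le k

lemma integrable_of_wiener (hm : Measurable f)
    (hW : ∑' k : Fin d → ℤ, (⨆ x ∈ block d k, (‖f x‖₊ : ℝ≥0∞)) < ∞) :
    Integrable f := by
  refine ⟨hm.aestronglyMeasurable, ?_⟩
  rw [HasFiniteIntegral]
  exact lt_of_le_of_lt lintegral_enorm_le hW

lemma locSup_le_of_mem_block {k : Fin d → ℤ} {x : Fin d → ℝ} (hx : x ∈ block d k) :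
    locSup f x ≤ ∑ j ∈ Finset.Icc (-1 : Fin d → ℤ) 1,
      ⨆ z ∈ block d (k + j), (‖f z‖₊ : ℝ≥0∞) := by
  refine iSup₂_le fun z hz => ?_
  have hdist : ∀ i, |z i - x i| < 1 := by
    intro i
    have := dist_le_pi_dist z x i
    rw [Real.dist_eq] at this
    exact lt_of_le_of_lt this (Metric.mem_ball.1 hz)
  set k' : Fin d → ℤ := fun i => ⌊z i⌋ with hk'
  have hzk' : z ∈ block d k' := fun i => ⟨Int.floor_le _, Int.lt_floor_add_one _⟩
  have hj : k' - k ∈ Finset.Icc (-1 : Fin d → ℤ) 1 := by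
    rw [Finset.mem_Icc]
    constructor <;> rw [Pi.le_def] <;> intro i <;>
      have h1 := (hx i).1 <;> have h2 := (hx i).2 <;> have h3 := (hdist i) <;>
      rw [abs_lt] at h3
    · simp only [Pi.neg_apply, Pi.one_apply, Pi.sub_apply, neg_le_sub_iff_le_add]
      have : ((k i : ℝ) - 1) ≤ z i := by linarith
      have := Int.le_floor.2 (by push_cast; linarith : ((k i - 1 : ℤ) : ℝ) ≤ z i)
      have hki : k' i = ⌊z i⌋ := rfl
      omega
    · simp only [Pi.sub_apply, Pi.one_apply, sub_le_iff_le_add]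
      have := Int.floor_lt.2 (by push_cast; linarith : z i < ((k i + 2 : ℤ) : ℝ))
      have hki : k' i = ⌊z i⌋ := rfl
      omega
  have : (‖f z‖₊ : ℝ≥0∞) ≤ ⨆ w ∈ block d (k + (k' - k)), (‖f w‖₊ : ℝ≥0∞) := by
    rw [add_sub_cancel]
    exact le_iSup₂_of_le z hzk' le_rfl
  exact le_trans this (Finset.single_le_sum (f := fun j =>
    ⨆ w ∈ block d (k + j), (‖f w‖₊ : ℝ≥0∞)) (fun _ _ => zero_le) hj)

lemma lintegral_locSup_lt_top
    (hW : ∑' k : Fin d → ℤ, (⨆ x ∈ block d k, (‖f x‖₊ : ℝ≥0∞)) < ∞) :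
    ∫⁻ x, locSup f x < ∞ := by
  have hle : ∫⁻ x, locSup f x ≤ ∑' k : Fin d → ℤ, ∑ j ∈ Finset.Icc (-1 : Fin d → ℤ) 1,
      ⨆ z ∈ block d (k + j), (‖f z‖₊ : ℝ≥0∞) := by
    rw [lintegral_eq_tsum_cube 0 one_pos]
    refine ENNReal.tsum_le_tsum fun k => ?_
    rw [← block_eq_cube]
    calc ∫⁻ x in block d k, locSup f x
        ≤ ∫⁻ _ in block d k, ∑ j ∈ Finset.Icc (-1 : Fin d → ℤ) 1,
            ⨆ z ∈ block d (k + j), (‖f z‖₊ : ℝ≥0∞) :=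
          setLIntegral_mono' (measurableSet_block k) fun x hx => locSup_le_of_mem_block hx
      _ = _ * volume (block d k) := setLIntegral_const _ _
      _ = _ := by rw [volume_block, mul_one]
  rw [Summable.tsum_finsetSum (fun j _ => ENNReal.summable)] at hle
  refine lt_of_le_of_lt hle (ENNReal.sum_lt_top.2 fun j _ => ?_)
  have : ∑' k : Fin d → ℤ, (⨆ z ∈ block d (k + j), (‖f z‖₊ : ℝ≥0∞)) =
      ∑' k : Fin d → ℤ, (⨆ z ∈ block d k, (‖f z‖₊ : ℝ≥0∞)) :=
    (Equiv.addRight j).tsum_eq fun k => ⨆ z ∈ block d k, (‖f z‖₊ : ℝ≥0∞)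
  rw [this]
  exact hW

end Stmt10

namespace Stmt10

lemma osc_tendsto_zero {f : (Fin d → ℝ) → ℂ} {x : Fin d → ℝ} (hx : ContinuousAt f x) :
    Filter.Tendsto (fun a : ℝ => osc f a x) (nhdsWithin 0 (Set.Ioi 0)) (nhds 0) := by
  rw [ENNReal.tendsto_nhds_zero]
  intro ε hε
  obtain ⟨ε', hε'0, hε'le⟩ : ∃ ε' : NNReal, 0 < ε' ∧ (ε' : ℝ≥0∞) ≤ ε := by
    rcases eq_or_ne ε ∞ with h | h
    · exact ⟨1, one_pos, by simp [h]⟩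
    · refine ⟨ε.toNNReal, ?_, by rw [ENNReal.coe_toNNReal h]⟩
      simpa [pos_iff_ne_zero, ENNReal.toNNReal_eq_zero_iff, h] using hε.ne'
  obtain ⟨δ, hδ0, hδ⟩ := Metric.continuousAt_iff.1 hx ((ε' : ℝ) / 2) (by positivity)
  filter_upwards [Ioo_mem_nhdsGT_of_mem (Set.mem_Ico.2 ⟨le_refl 0, hδ0⟩)] with a ha
  refine le_trans ?_ hε'le
  refine iSup₂_le fun z hz => iSup₂_le fun w hw => ?_
  have hz' : dist (f z) (f x) < (ε' : ℝ) / 2 :=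
    hδ (lt_trans (Metric.mem_ball.1 hz) ha.2)
  have hw' : dist (f w) (f x) < (ε' : ℝ) / 2 :=
    hδ (lt_trans (Metric.mem_ball.1 hw) ha.2)
  have : ‖f z - f w‖ ≤ (ε' : ℝ) := by
    have := dist_triangle_right (f z) (f w) (f x)
    rw [← dist_eq_norm]
    linarith
  exact_mod_cast ENNReal.coe_le_coe.2 (by rwa [← NNReal.coe_le_coe, coe_nnnorm])

lemma tendsto_lintegral_osc {f : (Fin d → ℝ) → ℂ}
    (hW : ∑' k : Fin d → ℤ, (⨆ x ∈ block d k, (‖f x‖₊ : ℝ≥0∞)) < ∞)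
    (hc : ∀ᵐ x : (Fin d → ℝ), ContinuousAt f x) :
    Filter.Tendsto (fun a : ℝ => ∫⁻ x, osc f a x) (nhdsWithin 0 (Set.Ioi 0)) (nhds 0) := by
  have h0 : (0 : ℝ≥0∞) = ∫⁻ _ : Fin d → ℝ, (0 : ℝ≥0∞) := by rw [lintegral_zero]
  rw [h0]
  refine tendsto_lintegral_filter_of_dominated_convergence (fun x => 2 * locSup f x)
    (Filter.Eventually.of_forall fun a => osc_measurable f a) ?_ ?_ ?_
  · filter_upwards [Ioo_mem_nhdsGT_of_mem (Set.mem_Ico.2 ⟨le_refl 0, one_pos⟩)] with a ha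
    exact Filter.Eventually.of_forall fun x => osc_le_locSup ha.2.le x
  · rw [lintegral_const_mul 2 (locSup_measurable f)]
    exact (ENNReal.mul_lt_top ENNReal.ofNat_lt_top (lintegral_locSup_lt_top hW)).ne
  · exact hc.mono fun x hx => osc_tendsto_zero hx

end Stmt10

namespace Stmt10

lemma enorm_tsum_le {ι : Type*} (u : ι → ℂ) :
    (‖∑' n, u n‖₊ : ℝ≥0∞) ≤ ∑' n, (‖u n‖₊ : ℝ≥0∞) := by
  by_cases h : Summable fun n => ‖u n‖₊
  · rw [← ENNReal.coe_tsum h]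
    exact ENNReal.coe_le_coe.2 (nnnorm_tsum_le h)
  · have : ∑' n, (‖u n‖₊ : ℝ≥0∞) = ⊤ := by
      by_contra hne
      exact h (ENNReal.tsum_coe_ne_top_iff_summable.1 hne)
    rw [this]; exact le_top

lemma key_bound {f : (Fin d → ℝ) → ℂ} (hm : Measurable f)
    (hW : ∑' k : Fin d → ℤ, (⨆ x ∈ block d k, (‖f x‖₊ : ℝ≥0∞)) < ∞)
    {a : ℝ} (ha : 0 < a) (ha1 : a ≤ 1) (y : Fin d → ℝ) :
    (‖(∑' n : Fin d → ℤ, a ^ d • f (y + a • zVec n)) - ∫ x, f x‖₊ : ℝ≥0∞) ≤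
      ∫⁻ x, osc f a x := by
  have hInt : Integrable f := integrable_of_wiener hm hW
  -- corner point of each cube
  have hti : ∀ (n : Fin d → ℤ) (i : Fin d), (y + a • zVec n) i = y i + a * (n i : ℝ) := by
    intro n i; simp [zVec, smul_eq_mul]
  have hcorner : ∀ n : Fin d → ℤ, (y + a • zVec n) ∈ cube y a n := by
    intro n
    rw [mem_cube]
    intro i
    rw [hti]
    exact ⟨le_refl _, by linarith⟩
  have hball : ∀ (n : Fin d → ℤ) (x : Fin d → ℝ), x ∈ cube y a n →
      (‖f (y + a • zVec n) - f x‖₊ : ℝ≥0∞) ≤ osc f a x := by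
    intro n x hx
    refine le_osc ?_ (Metric.mem_ball_self ha)
    rw [Metric.mem_ball, dist_pi_lt_iff ha]
    intro i
    rw [Real.dist_eq, hti]
    have h1 := (mem_cube.1 hx i).1
    have h2 := (mem_cube.1 hx i).2
    rw [abs_lt]
    constructor <;> linarith
  -- finiteness facts
  have hosc_fin : ∫⁻ x, osc f a x < ∞ := by
    calc ∫⁻ x, osc f a x ≤ ∫⁻ x, 2 * locSup f x := lintegral_mono (osc_le_locSup ha1)
      _ = 2 * ∫⁻ x, locSup f x := lintegral_const_mul 2 (locSup_measurable f)
      _ < ∞ := ENNReal.mul_lt_top ENNReal.ofNat_lt_top (lintegral_locSup_lt_top hW)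
  have hf_fin : ∫⁻ x, (‖f x‖₊ : ℝ≥0∞) < ∞ := lt_of_le_of_lt lintegral_enorm_le hW
  -- ‖F n‖ as an integral over the cube
  have hconst : ∀ (n : Fin d → ℤ) (c : ℝ≥0∞),
      ∫⁻ _ in cube y a n, c = ENNReal.ofReal (a ^ d) * c := by
    intro n c
    rw [setLIntegral_const, volume_cube y ha, mul_comm]
  have hFnorm : ∀ n : Fin d → ℤ, (‖a ^ d • f (y + a • zVec n)‖₊ : ℝ≥0∞) =
      ∫⁻ _ in cube y a n, (‖f (y + a • zVec n)‖₊ : ℝ≥0∞) := by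
    intro n
    rw [hconst, nnnorm_smul, ENNReal.coe_mul, ← enorm_eq_nnnorm (a ^ d), Real.enorm_eq_ofReal (by positivity)]
  -- summability of the Riemann sum terms
  have hFsum : ∑' n : Fin d → ℤ, (‖a ^ d • f (y + a • zVec n)‖₊ : ℝ≥0∞) < ∞ := by
    have hle : ∀ n : Fin d → ℤ, (‖a ^ d • f (y + a • zVec n)‖₊ : ℝ≥0∞) ≤
        ∫⁻ x in cube y a n, (osc f a x + (‖f x‖₊ : ℝ≥0∞)) := by
      intro n
      rw [hFnorm n]
      refine setLIntegral_mono' (measurableSet_cube y a n) fun x hx => ?_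
      have h1 : (‖f (y + a • zVec n)‖₊ : ℝ≥0∞) ≤
          (‖f (y + a • zVec n) - f x‖₊ : ℝ≥0∞) + (‖f x‖₊ : ℝ≥0∞) := by
        rw [← ENNReal.coe_add]
        exact_mod_cast ENNReal.coe_le_coe.2
          (by simpa using nnnorm_add_le (f (y + a • zVec n) - f x) (f x))
      exact le_trans h1 (add_le_add_left (hball n x hx) _)
    calc ∑' n : Fin d → ℤ, (‖a ^ d • f (y + a • zVec n)‖₊ : ℝ≥0∞)
        ≤ ∑' n : Fin d → ℤ, ∫⁻ x in cube y a n, (osc f a x + (‖f x‖₊ : ℝ≥0∞)) :=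
          ENNReal.tsum_le_tsum hle
      _ = ∫⁻ x, (osc f a x + (‖f x‖₊ : ℝ≥0∞)) := (lintegral_eq_tsum_cube y ha _).symm
      _ = (∫⁻ x, osc f a x) + ∫⁻ x, (‖f x‖₊ : ℝ≥0∞) :=
          lintegral_add_left (osc_measurable f a) _
      _ < ∞ := ENNReal.add_lt_top.2 ⟨hosc_fin, hf_fin⟩
  have hFsummable : Summable fun n : Fin d → ℤ => a ^ d • f (y + a • zVec n) :=
    Summable.of_nnnorm (ENNReal.tsum_coe_ne_top_iff_summable.1 hFsum.ne)
  -- the integral splits over the cubes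
  have hIsum : HasSum (fun n : Fin d → ℤ => ∫ x in cube y a n, f x) (∫ x, f x) := by
    have h := hasSum_integral_iUnion (μ := volume) (f := f)
      (fun n : Fin d → ℤ => measurableSet_cube y a n)
      (pairwise_disjoint_cube y ha) (by rw [iUnion_cube y ha]; exact hInt.integrableOn)
    rwa [iUnion_cube y ha, setIntegral_univ] at h
  -- each F n is the integral of the constant value over the cube
  have hFint : ∀ n : Fin d → ℤ, a ^ d • f (y + a • zVec n) =
      ∫ _ in cube y a n, f (y + a • zVec n) := by
    intro n
    rw [setIntegral_const, measureReal_def, volume_cube y ha, ENNReal.toReal_ofReal (by positivity)]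
  -- per-cube bound
  have hterm : ∀ n : Fin d → ℤ,
      (‖a ^ d • f (y + a • zVec n) - ∫ x in cube y a n, f x‖₊ : ℝ≥0∞) ≤
        ∫⁻ x in cube y a n, osc f a x := by
    intro n
    have hconst_int : IntegrableOn (fun _ => f (y + a • zVec n)) (cube y a n) volume :=
      integrableOn_const (by rw [volume_cube y ha]; exact ENNReal.ofReal_ne_top)
    have : a ^ d • f (y + a • zVec n) - ∫ x in cube y a n, f x =
        ∫ x in cube y a n, (f (y + a • zVec n) - f x) := by
      rw [integral_sub hconst_int hInt.integrableOn, ← hFint n]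
    rw [this]
    calc (‖∫ x in cube y a n, (f (y + a • zVec n) - f x)‖₊ : ℝ≥0∞)
        ≤ ∫⁻ x in cube y a n, (‖f (y + a • zVec n) - f x‖₊ : ℝ≥0∞) :=
          enorm_integral_le_lintegral_enorm _
      _ ≤ ∫⁻ x in cube y a n, osc f a x :=
          setLIntegral_mono' (measurableSet_cube y a n) fun x hx => hball n x hx
  -- put it together
  calc (‖(∑' n : Fin d → ℤ, a ^ d • f (y + a • zVec n)) - ∫ x, f x‖₊ : ℝ≥0∞)
      = (‖∑' n : Fin d → ℤ, (a ^ d • f (y + a • zVec n) - ∫ x in cube y a n, f x)‖₊ :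
          ℝ≥0∞) := by
        rw [Summable.tsum_sub hFsummable hIsum.summable, hIsum.tsum_eq]
    _ ≤ ∑' n : Fin d → ℤ,
          (‖a ^ d • f (y + a • zVec n) - ∫ x in cube y a n, f x‖₊ : ℝ≥0∞) :=
        enorm_tsum_le _
    _ ≤ ∑' n : Fin d → ℤ, ∫⁻ x in cube y a n, osc f a x := ENNReal.tsum_le_tsum hterm
    _ = ∫⁻ x, osc f a x := (lintegral_eq_tsum_cube y ha _).symm

end Stmt10

/-- uniform convergence of Riemann sums for a locally Riemann
integrable function in the Wiener space (local Riemann integrability is encoded,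
via Lebesgue's criterion, as almost-everywhere continuity; the Wiener norm is
taken with genuine pointwise suprema). -/
theorem stmt10 {d : ℕ} (f : (Fin d → ℝ) → ℂ) (hm : Measurable f)
    (hW : ∑' k : Fin d → ℤ, (⨆ x ∈ block d k, (‖f x‖₊ : ℝ≥0∞)) < ∞)
    (hc : ∀ᵐ x : (Fin d → ℝ), ContinuousAt f x) :
    Filter.Tendsto
      (fun a : ℝ => ⨆ y : Fin d → ℝ,
        (‖(∑' n : Fin d → ℤ, a ^ d • f (y + a • zVec n)) - ∫ x, f x‖₊ : ℝ≥0∞))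
      (nhdsWithin 0 (Set.Ioi 0)) (nhds 0) := by
  refine tendsto_of_tendsto_of_tendsto_of_le_of_le' tendsto_const_nhds
    (Stmt10.tendsto_lintegral_osc hW hc)
    (Filter.Eventually.of_forall fun _ => zero_le) ?_
  filter_upwards [Ioo_mem_nhdsGT_of_mem (Set.mem_Ico.2 ⟨le_refl (0 : ℝ), one_pos⟩)] with a ha
  exact iSup_le fun y => Stmt10.key_bound hm hW ha.1 ha.2.le y
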